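/- Let G be a finite simple graph with maximum degree at most 3 and let S be a nonempty subset of V(G) such that there are exactly k edges of G with one endpoint in S and the other in V(G) ∖ S. If every vertex in N_G(S) ∖ S has degree 2 or 3 in G, then c_G(S) ≤ 4k + ⌊k/2⌋. -/

import Mathlib

open Finset

/-- The domination number: minimum size of a dominating set. -/
noncomputable def gamma {V : Type*} [Fintype V] (G : SimpleGraph V) : ℕ :=
  sInf {n | ∃ D : Finset V, D.card = n ∧ ∀ v : V, v ∈ D ∨ ∃ u ∈ D, G.Adj u v}

/-- The degree of a vertex. -/
noncomputable def gdeg {V : Type*} (G : SimpleGraph V) (v : V) : ℕ :=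
  Nat.card (G.neighborSet v)

/-- Weight of a vertex of degree `d` (for graphs of maximum degree at most 3). -/
def wt (d : ℕ) : ℕ :=
  if d = 0 then 20 else if d = 1 then 15 else if d = 2 then 11 else 7

/-- Total weight of a graph: `w(G) = Σ_v w_G(v)`. -/
noncomputable def wsum {V : Type*} [Fintype V] (G : SimpleGraph V) : ℕ :=
  ∑ v : V, wt (gdeg G v)

/-- The cost `c_G(S) = w_{G-S}(V∖S) - w_G(V∖S)`. -/
noncomputable def cost {V : Type*} [Fintype V] [DecidableEq V]
    (G : SimpleGraph V) (S : Finset V) : ℤ :=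
  (wsum (G.induce (↑(Sᶜ) : Set V)) : ℤ) - ∑ v ∈ Sᶜ, (wt (gdeg G v) : ℤ)

lemma wt_key {d eV cV : ℕ} (h : eV + cV = d) (hd : d = 2 ∨ d = 3) (he : 1 ≤ eV) :
    wt cV ≤ wt d + 4 * eV + eV / 2 := by
  have h2 : cV ≤ 2 := by omega
  rcases hd with h3 | h3 <;> subst h3 <;> interval_cases cV <;> simp_all [wt]

lemma sum_div_two_le {α : Type*} [DecidableEq α] (s : Finset α) (f : α → ℕ) :
    (∑ x ∈ s, f x / 2) ≤ (∑ x ∈ s, f x) / 2 := by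
  induction s using Finset.induction with
  | empty => simp
  | insert a s h ih => rw [Finset.sum_insert h, Finset.sum_insert h]; omega

theorem cost_bound {V : Type*} [Fintype V] [DecidableEq V] (G : SimpleGraph V)
    (hdeg : ∀ v : V, gdeg G v ≤ 3)
    (S : Finset V) (hS : S.Nonempty) (k : ℕ)
    (hk : Nat.card {e : Sym2 V // e ∈ G.edgeSet ∧ ∃ a b, a ∈ S ∧ b ∉ S ∧ e = s(a, b)} = k)
    (hN : ∀ v : V, v ∉ S → (∃ u ∈ S, G.Adj u v) → gdeg G v = 2 ∨ gdeg G v = 3) :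
    cost G S ≤ ((4 * k + k / 2 : ℕ) : ℤ) := by
  classical
  set eV : V → ℕ := fun v => (S.filter (fun a => G.Adj v a)).card with heV
  set cV : V → ℕ := fun v => ((Sᶜ).filter (fun u => G.Adj v u)).card with hcV
  -- degree as filter cardinality
  have hged : ∀ v : V, gdeg G v = (univ.filter (fun u => G.Adj v u)).card := by
    intro v
    rw [gdeg, Nat.card_eq_fintype_card, SimpleGraph.card_neighborSet_eq_degree,
      SimpleGraph.degree, SimpleGraph.neighborFinset_eq_filter]
  -- degree splits as neighbors in S plus neighbors outside S
  have hsplit : ∀ v : V, gdeg G v = eV v + cV v := by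
    intro v
    rw [hged, ← Finset.union_compl S, Finset.filter_union,
      Finset.card_union_of_disjoint (Finset.disjoint_filter_filter disjoint_compl_right)]
  -- degree in the induced graph
  have hind : ∀ x : (↑(Sᶜ) : Set V), gdeg (G.induce (↑(Sᶜ) : Set V)) x = cV ↑x := by
    intro x
    rw [gdeg]
    have e1 : (G.induce (↑(Sᶜ) : Set V)).neighborSet x ≃ {u : V // u ∈ Sᶜ ∧ G.Adj ↑x u} :=
      Equiv.subtypeSubtypeEquivSubtypeInter (· ∈ (↑(Sᶜ) : Set V)) (G.Adj ↑x)
    rw [Nat.card_congr e1, Nat.card_eq_fintype_card, Fintype.card_subtype]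
    have h2 : Finset.filter (fun u => u ∈ Sᶜ ∧ G.Adj ↑x u) univ
        = (Sᶜ).filter (fun u => G.Adj ↑x u) := by
      ext u; simp
    rw [h2]
  -- the weight of the induced graph
  have hw : wsum (G.induce (↑(Sᶜ) : Set V)) = ∑ v ∈ Sᶜ, wt (cV v) := by
    rw [wsum, Finset.sum_congr rfl (fun x _ => by rw [hind x])]
    exact (Finset.sum_subtype (Sᶜ) (fun x => Finset.mem_coe.symm) (fun v => wt (cV v))).symm
  -- the number of crossing edges dominates the sum of eV over Sᶜ
  have hle : ∑ v ∈ Sᶜ, eV v ≤ k := by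
    rw [← hk]
    have hT : ∑ b ∈ Sᶜ, eV b = ((Sᶜ ×ˢ S).filter (fun p => G.Adj p.1 p.2)).card := by
      rw [Finset.card_filter, Finset.sum_product]
      exact Finset.sum_congr rfl fun b _ => (Finset.card_filter _ _)
    have hE : Nat.card {e : Sym2 V // e ∈ G.edgeSet ∧ ∃ a b, a ∈ S ∧ b ∉ S ∧ e = s(a, b)}
        = (univ.filter
            (fun e : Sym2 V => e ∈ G.edgeSet ∧ ∃ a b, a ∈ S ∧ b ∉ S ∧ e = s(a, b))).card := by
      rw [Nat.card_eq_fintype_card, Fintype.card_subtype]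
    rw [hT, hE]
    apply Finset.card_le_card_of_injOn (fun p => s(p.2, p.1))
    · intro p hp
      simp only [Finset.mem_coe, Finset.mem_filter, Finset.mem_product, Finset.mem_compl] at hp
      simp only [Finset.mem_coe, Finset.mem_filter, Finset.mem_univ, true_and]
      exact ⟨(hp.2.symm : G.Adj p.2 p.1), p.2, p.1, hp.1.2, hp.1.1, rfl⟩
    · intro p hp q hq hpq
      simp only [Finset.coe_filter, Set.mem_setOf_eq, Finset.mem_product,
        Finset.mem_compl] at hp hq
      rw [Sym2.eq_iff] at hpq
      rcases hpq with ⟨h1, h2⟩ | ⟨h1, h2⟩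
      · exact Prod.ext h2 h1
      · exact absurd (h1 ▸ hp.1.2) hq.1.1
  -- pointwise weight bound
  have hpt : ∀ v ∈ Sᶜ, wt (cV v) ≤ wt (gdeg G v) + 4 * eV v + eV v / 2 := by
    intro v hv
    by_cases h0 : eV v = 0
    · have hc : cV v = gdeg G v := by rw [hsplit v, h0, zero_add]
      rw [hc, h0]
      omega
    · have hne : (S.filter (fun a => G.Adj v a)).Nonempty :=
        Finset.card_pos.mp (Nat.pos_of_ne_zero h0)
      obtain ⟨a, ha⟩ := hne
      rw [Finset.mem_filter] at ha
      have hd23 := hN v (Finset.mem_compl.mp hv) ⟨a, ha.1, ha.2.symm⟩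
      exact wt_key (hsplit v).symm hd23 (by omega)
  -- sum everything
  have hsum : ∑ v ∈ Sᶜ, wt (cV v)
      ≤ ∑ v ∈ Sᶜ, wt (gdeg G v) + (4 * k + k / 2) := by
    calc ∑ v ∈ Sᶜ, wt (cV v)
        ≤ ∑ v ∈ Sᶜ, (wt (gdeg G v) + 4 * eV v + eV v / 2) := Finset.sum_le_sum hpt
      _ = ∑ v ∈ Sᶜ, wt (gdeg G v) + 4 * (∑ v ∈ Sᶜ, eV v) + ∑ v ∈ Sᶜ, eV v / 2 := by
          rw [Finset.sum_add_distrib, Finset.sum_add_distrib, Finset.mul_sum]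
      _ ≤ ∑ v ∈ Sᶜ, wt (gdeg G v) + 4 * (∑ v ∈ Sᶜ, eV v) + (∑ v ∈ Sᶜ, eV v) / 2 := by
          have := sum_div_two_le (Sᶜ) eV
          omega
      _ ≤ ∑ v ∈ Sᶜ, wt (gdeg G v) + (4 * k + k / 2) := by
          have h2 := Nat.div_le_div_right (c := 2) hle
          omega
  rw [cost, hw]
  have hcast : (∑ v ∈ Sᶜ, (wt (gdeg G v) : ℤ)) = ((∑ v ∈ Sᶜ, wt (gdeg G v) : ℕ) : ℤ) := by
    push_cast
    rfl
  rw [hcast]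
  omega
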